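/- Let m → G ← n be a monogamous acyclic cospan of hypergraphs with discrete interfaces, and let e be any hyperedge of G. Then the subhypergraph L_e of G consisting of the single hyperedge e together with its source and target nodes is convex in G. -/

import Mathlib

namespace SDRT

/-- A directed hypergraph: a set of nodes and, for each hyperedge, an ordered
list of source nodes and an ordered list of target nodes.  A `(k,l)`-hyperedge
is a hyperedge with `k` sources and `l` targets. -/
structure Hyp : Type 1 where
  V : Type
  E : Type
  src : E → List V
  tgt : E → List V

namespace Hyp

/-- The set of pairs `(h, i)` such that `v` is the `i`-th target of the hyperedge `h`.
The in-degree of `v` is the number of such pairs. -/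
def inPairs (G : Hyp) (v : G.V) : Set (G.E × ℕ) := {p | (G.tgt p.1)[p.2]? = some v}

/-- The set of pairs `(h, j)` such that `v` is the `j`-th source of the hyperedge `h`.
The out-degree of `v` is the number of such pairs. -/
def outPairs (G : Hyp) (v : G.V) : Set (G.E × ℕ) := {p | (G.src p.1)[p.2]? = some v}

/-- `v` has in-degree `0`. -/
def inDegZero (G : Hyp) (v : G.V) : Prop := G.inPairs v = ∅

/-- `v` has in-degree `1`. -/
def inDegOne (G : Hyp) (v : G.V) : Prop := ∃! p, p ∈ G.inPairs v

/-- `v` has out-degree `0`. -/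
def outDegZero (G : Hyp) (v : G.V) : Prop := G.outPairs v = ∅

/-- `v` has out-degree `1`. -/
def outDegOne (G : Hyp) (v : G.V) : Prop := ∃! p, p ∈ G.outPairs v

/-- `h'` is a successor of `h` if some node is both a target of `h` and a source of `h'`. -/
def Successor (G : Hyp) (h h' : G.E) : Prop := ∃ v, v ∈ G.tgt h ∧ v ∈ G.src h'

/-- `l` is a path (nonempty sequence of hyperedges, each a successor of the previous)
from the node `v` to the node `v'`: `v` is among the sources of the first hyperedge
and `v'` among the targets of the last one. -/
def PathFrom (G : Hyp) (l : List G.E) (v v' : G.V) : Prop :=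
  ∃ hne : l ≠ [], l.Chain' G.Successor ∧ v ∈ G.src (l.head hne) ∧ v' ∈ G.tgt (l.getLast hne)

/-- `l` is a path from the hyperedge `h` to the hyperedge `h'`. -/
def EdgePath (G : Hyp) (l : List G.E) (h h' : G.E) : Prop :=
  ∃ hne : l ≠ [], l.Chain' G.Successor ∧ l.head hne = h ∧ l.getLast hne = h'

/-- A hypergraph is acyclic if there is no path from a node to itself. -/
def Acyclic (G : Hyp) : Prop := ∀ (v : G.V) (l : List G.E), ¬ G.PathFrom l v v

end Hyp

/-- A subhypergraph: a set of nodes and hyperedges closed under taking the sources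
and targets of its hyperedges. -/
structure SubHyp (G : Hyp) where
  nodes : Set G.V
  edges : Set G.E
  src_mem : ∀ e ∈ edges, ∀ v ∈ G.src e, v ∈ nodes
  tgt_mem : ∀ e ∈ edges, ∀ v ∈ G.tgt e, v ∈ nodes

/-- A subhypergraph `H` of `G` is convex if every path in `G` between nodes of `H`
consists only of hyperedges of `H`. -/
def SubHyp.Convex {G : Hyp} (H : SubHyp G) : Prop :=
  ∀ v ∈ H.nodes, ∀ v' ∈ H.nodes, ∀ l, G.PathFrom l v v' → ∀ e ∈ l, e ∈ H.edges

/-- The hypergraph underlying a subhypergraph. -/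
def SubHyp.toHyp {G : Hyp} (H : SubHyp G) : Hyp where
  V := H.nodes
  E := H.edges
  src := fun e => (G.src e.1).pmap (fun v hv => (⟨v, hv⟩ : H.nodes))
    (fun v hv => H.src_mem e.1 e.2 v hv)
  tgt := fun e => (G.tgt e.1).pmap (fun v hv => (⟨v, hv⟩ : H.nodes))
    (fun v hv => H.tgt_mem e.1 e.2 v hv)

/-- A cospan of hypergraphs with discrete interfaces `m → G ← n`. -/
structure Cospan (m n : Type) : Type 1 where
  G : Hyp
  inp : m → G.V
  out : n → G.V

namespace Cospan

/-- A cospan is monogamous if both legs are injective, nodes in the image of the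
input leg have in-degree 0, all other nodes have in-degree 1, nodes in the image
of the output leg have out-degree 0, and all other nodes have out-degree 1. -/
def Monogamous {m n : Type} (A : Cospan m n) : Prop :=
  Function.Injective A.inp ∧ Function.Injective A.out ∧
  (∀ v ∈ Set.range A.inp, A.G.inDegZero v) ∧
  (∀ v ∉ Set.range A.inp, A.G.inDegOne v) ∧
  (∀ v ∈ Set.range A.out, A.G.outDegZero v) ∧
  (∀ v ∉ Set.range A.out, A.G.outDegOne v)

/-- A cospan is acyclic if its carrier is. -/
def Acyclic {m n : Type} (A : Cospan m n) : Prop := A.G.Acyclic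

/-- Composition of cospans by pushout: glue `G` and `H` along the common
interface `n`, identifying `A.out k` with `B.inp k` for every `k : n`. -/
def comp {m n p : Type} (A : Cospan m n) (B : Cospan n p) : Cospan m p where
  G := { V := Quot (fun x y : A.G.V ⊕ B.G.V =>
                      ∃ k : n, x = Sum.inl (A.out k) ∧ y = Sum.inr (B.inp k))
         E := A.G.E ⊕ B.G.E
         src := Sum.elim (fun e => (A.G.src e).map (fun v => Quot.mk _ (Sum.inl v)))
                         (fun e => (B.G.src e).map (fun v => Quot.mk _ (Sum.inr v)))
         tgt := Sum.elim (fun e => (A.G.tgt e).map (fun v => Quot.mk _ (Sum.inl v)))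
                         (fun e => (B.G.tgt e).map (fun v => Quot.mk _ (Sum.inr v))) }
  inp := fun x => Quot.mk _ (Sum.inl (A.inp x))
  out := fun y => Quot.mk _ (Sum.inr (B.out y))

/-- Monoidal product (tensor) of cospans: disjoint union of the carriers, with
the evident interface maps. -/
def tensor {m₁ n₁ m₂ n₂ : Type} (A : Cospan m₁ n₁) (B : Cospan m₂ n₂) :
    Cospan (m₁ ⊕ m₂) (n₁ ⊕ n₂) where
  G := { V := A.G.V ⊕ B.G.V
         E := A.G.E ⊕ B.G.E
         src := Sum.elim (fun e => (A.G.src e).map Sum.inl) (fun e => (B.G.src e).map Sum.inr)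
         tgt := Sum.elim (fun e => (A.G.tgt e).map Sum.inl) (fun e => (B.G.tgt e).map Sum.inr) }
  inp := Sum.elim (fun x => Sum.inl (A.inp x)) (fun x => Sum.inr (B.inp x))
  out := Sum.elim (fun y => Sum.inl (A.out y)) (fun y => Sum.inr (B.out y))

/-- The identity cospan on `k`: the discrete hypergraph on `k` with identity legs. -/
def idCospan (k : Type) : Cospan k k where
  G := { V := k, E := Empty, src := Empty.elim, tgt := Empty.elim }
  inp := id
  out := id

end Cospan

/-- An isomorphism of cospans: a hypergraph isomorphism of the carriers commuting
with the interface legs. -/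
structure CospanIso {m n : Type} (A B : Cospan m n) where
  nodeEquiv : A.G.V ≃ B.G.V
  edgeEquiv : A.G.E ≃ B.G.E
  src_eq : ∀ e, B.G.src (edgeEquiv e) = (A.G.src e).map nodeEquiv
  tgt_eq : ∀ e, B.G.tgt (edgeEquiv e) = (A.G.tgt e).map nodeEquiv
  inp_eq : ∀ x, nodeEquiv (A.inp x) = B.inp x
  out_eq : ∀ y, nodeEquiv (A.out y) = B.out y

/-- Two cospans are isomorphic if there is an isomorphism between them. -/
def Cospan.Isomorphic {m n : Type} (A B : Cospan m n) : Prop := Nonempty (CospanIso A B)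

/-- A homomorphism of hypergraphs: maps nodes to nodes and hyperedges to
hyperedges, preserving the ordered lists of sources and targets. -/
structure HypHom (G H : Hyp) where
  nodeMap : G.V → H.V
  edgeMap : G.E → H.E
  src_eq : ∀ e, H.src (edgeMap e) = (G.src e).map nodeMap
  tgt_eq : ∀ e, H.tgt (edgeMap e) = (G.tgt e).map nodeMap

/-- The image of a hypergraph homomorphism, as a subhypergraph of the codomain. -/
def HypHom.image {G H : Hyp} (f : HypHom G H) : SubHyp H where
  nodes := Set.range f.nodeMap
  edges := Set.range f.edgeMap
  src_mem := by
    rintro e ⟨e', rfl⟩ v hv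
    rw [f.src_eq] at hv
    rcases List.mem_map.mp hv with ⟨w, -, rfl⟩
    exact ⟨w, rfl⟩
  tgt_mem := by
    rintro e ⟨e', rfl⟩ v hv
    rw [f.tgt_eq] at hv
    rcases List.mem_map.mp hv with ⟨w, -, rfl⟩
    exact ⟨w, rfl⟩


/-- In a monogamous cospan, a node is the source of at most one hyperedge. -/
lemma src_unique {m n : Type} (A : Cospan m n) (hm : A.Monogamous)
    {v : A.G.V} {e₁ e₂ : A.G.E} (h1 : v ∈ A.G.src e₁) (h2 : v ∈ A.G.src e₂) : e₁ = e₂ := by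
  obtain ⟨i, hi⟩ := List.mem_iff_getElem?.mp h1
  obtain ⟨j, hj⟩ := List.mem_iff_getElem?.mp h2
  by_cases hv : v ∈ Set.range A.out
  · have h0 := hm.2.2.2.2.1 v hv
    rw [Hyp.outDegZero] at h0
    exact absurd (show (e₁, i) ∈ A.G.outPairs v from hi) (by simp [h0])
  · obtain ⟨p, -, hu⟩ := hm.2.2.2.2.2 v hv
    have h1' := hu (e₁, i) hi
    have h2' := hu (e₂, j) hj
    have : (e₁, i) = (e₂, j) := h1'.trans h2'.symm
    exact congrArg Prod.fst this

/-- In a monogamous cospan, a node is the target of at most one hyperedge. -/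
lemma tgt_unique {m n : Type} (A : Cospan m n) (hm : A.Monogamous)
    {v : A.G.V} {e₁ e₂ : A.G.E} (h1 : v ∈ A.G.tgt e₁) (h2 : v ∈ A.G.tgt e₂) : e₁ = e₂ := by
  obtain ⟨i, hi⟩ := List.mem_iff_getElem?.mp h1
  obtain ⟨j, hj⟩ := List.mem_iff_getElem?.mp h2
  by_cases hv : v ∈ Set.range A.inp
  · have h0 := hm.2.2.1 v hv
    rw [Hyp.inDegZero] at h0
    exact absurd (show (e₁, i) ∈ A.G.inPairs v from hi) (by simp [h0])
  · obtain ⟨p, -, hu⟩ := hm.2.2.2.1 v hv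
    have h1' := hu (e₁, i) hi
    have h2' := hu (e₂, j) hj
    have : (e₁, i) = (e₂, j) := h1'.trans h2'.symm
    exact congrArg Prod.fst this

/-- Let `m → G ← n` be a monogamous acyclic cospan and `e` a
hyperedge of `G`.  Then the subhypergraph of `G` consisting of the single
hyperedge `e` together with its source and target nodes is convex in `G`. -/
theorem single_edge_convex {m n : Type} [Finite m] [Finite n] (A : Cospan m n)
    (hm : A.Monogamous) (ha : A.Acyclic) (e : A.G.E) :
    SubHyp.Convex (G := A.G)
      { nodes := {v | v ∈ A.G.src e ∨ v ∈ A.G.tgt e}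
        edges := {e}
        src_mem := by
          rintro e' he' v hv
          rw [Set.mem_singleton_iff] at he'
          subst he'
          exact Or.inl hv
        tgt_mem := by
          rintro e' he' v hv
          rw [Set.mem_singleton_iff] at he'
          subst he'
          exact Or.inr hv } := by
  rintro v hv v' hv' l ⟨hne, hchain, hvsrc, hvtgt⟩ a ha'
  rcases hv with hvs | hvt
  · -- v ∈ src e, so head l = e
    have hhead : l.head hne = e := src_unique A hm hvsrc hvs
    obtain ⟨l', rfl⟩ : ∃ l', l = e :: l' :=
      ⟨l.tail, by rw [← hhead]; exact (List.cons_head_tail hne).symm⟩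
    rcases hv' with hv's | hv't
    · -- v' ∈ src e : contradiction
      exfalso
      rcases List.eq_nil_or_concat l' with rfl | ⟨l'', b, rfl⟩
      · -- l = [e], so v' ∈ tgt e and v' ∈ src e gives cycle [e]
        simp only [List.getLast_singleton] at hvtgt
        exact ha v' [e] ⟨by simp, List.isChain_singleton _, by simpa using hv's, by simpa using hvtgt⟩
      · -- l = e :: l'' ++ [b]; cycle through e
        simp only [List.concat_eq_append] at hvtgt hchain
        have hch2 : (e :: (l'' ++ [b]) ++ [e]).Chain' A.G.Successor := by
          unfold List.Chain'; rw [List.isChain_append]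
          refine ⟨hchain, List.isChain_singleton _, ?_⟩
          intro x hx y hy
          simp only [List.head?_cons, Option.mem_def, Option.some.injEq] at hy
          rw [List.getLast?_eq_getLast (by simp)] at hx
          simp only [Option.mem_def, Option.some.injEq] at hx
          subst hx; subst hy
          exact ⟨v', hvtgt, hv's⟩
        -- this chain is e :: ((l'' ++ [b]) ++ [e])
        have hch3 := hch2
        unfold List.Chain' at hch3; rw [List.cons_append, List.isChain_cons] at hch3
        obtain ⟨hsucc, hch4⟩ := hch3
        obtain ⟨u, hu1, hu2⟩ := hsucc (((l'' ++ [b]) ++ [e]).head (by simp))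
          (List.head?_eq_head _)
        refine ha u ((l'' ++ [b]) ++ [e]) ⟨by simp, hch4, hu2, ?_⟩
        rw [List.getLast_append]
        exact hu1
    · -- v' ∈ tgt e, so last l = e
      have hlast : l'.getLast? = some e ∨ l' = [] := by
        rcases List.eq_nil_or_concat l' with rfl | ⟨l'', b, rfl⟩
        · exact Or.inr rfl
        · left
          simp only [List.concat_eq_append] at hvtgt ⊢
          have hcons : (e :: (l'' ++ [b])).getLast (by simp) = (l'' ++ [b]).getLast (by simp) :=
            List.getLast_cons (by simp)
          rw [List.getLast?_eq_getLast (by simp), ← hcons]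
          exact congrArg some (tgt_unique A hm hvtgt hv't)
      rcases hlast with hlast | rfl
      · -- l' nonempty with last = e : cycle
        exfalso
        have hne' : l' ≠ [] := by
          intro h; rw [h] at hlast; simp at hlast
        unfold List.Chain' at hchain; rw [List.isChain_cons] at hchain
        obtain ⟨hsucc, hch4⟩ := hchain
        obtain ⟨u, hu1, hu2⟩ := hsucc (l'.head hne') (List.head?_eq_head _)
        refine ha u l' ⟨hne', hch4, hu2, ?_⟩
        rw [List.getLast?_eq_getLast hne'] at hlast
        have he : l'.getLast hne' = e := by simpa using hlast
        rw [he]; exact hu1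
      · -- l = [e]
        simp only [List.mem_singleton] at ha'
        exact ha'
  · -- v ∈ tgt e : contradiction in all cases
    exfalso
    rcases hv' with hv's | hv't
    · -- path l ++ [e] from v to v
      have hch2 : (l ++ [e]).Chain' A.G.Successor := by
        unfold List.Chain'; rw [List.isChain_append]
        refine ⟨hchain, List.isChain_singleton _, ?_⟩
        intro x hx y hy
        simp only [List.head?_cons, Option.mem_def, Option.some.injEq] at hy
        rw [List.getLast?_eq_getLast hne] at hx
        simp only [Option.mem_def, Option.some.injEq] at hx
        subst hx; subst hy
        exact ⟨v', hvtgt, hv's⟩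
      refine ha v (l ++ [e]) ⟨by simp [hne], hch2, ?_, ?_⟩
      · rw [List.head_append_of_ne_nil hne]; exact hvsrc
      · rw [List.getLast_append]; exact hvt
    · -- last l = e, so path l from v to v
      have hlast : l.getLast hne = e := tgt_unique A hm hvtgt hv't
      exact ha v l ⟨hne, hchain, hvsrc, hlast ▸ hvt⟩

end SDRT
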